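/- The BJGP-gadget satisfies properties P1–P4: its vertex set contains the vertices x_j for j in S; it has a perfect matching; for each pair p ≠ q in S, the graph obtained by deleting x_p and x_q, if non-empty, has a perfect matching; and for each subset L of S with |L| ≥ 3, the graph obtained by deleting {x_l : l ∈ L}, if non-empty, has no perfect matching. -/

import Mathlib

/-- Vertex set of the BJGP- and XP-gadgets for colour set `α` with minimum `m` and
maximum `M`: the vertices `x_j` (`Sum.inl j`, `j ∈ S`) and the vertices `y_j`
(`Sum.inr j`, `j ∈ S \ {m, M}`). -/
abbrev GadVert (α : Type*) (m M : α) : Type _ := α ⊕ {j : α // j ≠ m ∧ j ≠ M}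

/-- The BJGP-gadget (Bang-Jensen and Gutin): edges `x_j y_k` for all `j ∈ S`,
`k ∈ S \ {m, M}`, and `x_j x_k` for all `j ≠ k ∈ S`. -/
def bjgpGadget {α : Type*} (m M : α) : SimpleGraph (GadVert α m M) :=
  SimpleGraph.fromRel (fun a b =>
    match a, b with
    | Sum.inl _, Sum.inr _ => True
    | Sum.inl j, Sum.inl k => j ≠ k
    | _, _ => False)

lemma pm_of_involution {V : Type*} (G : SimpleGraph V) (f : V → V)
    (hinv : ∀ v, f (f v) = v) (hadj : ∀ v, G.Adj v (f v)) :
    ∃ M : G.Subgraph, M.IsPerfectMatching := by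
  refine ⟨⟨Set.univ, fun v w => f v = w, ?_, ?_, ?_⟩, ?_⟩
  · rintro v w rfl; exact hadj v
  · intro v w _; trivial
  · constructor; rintro v w rfl; exact hinv v
  · rw [SimpleGraph.Subgraph.isPerfectMatching_iff]
    intro v
    refine ⟨f v, rfl, fun y hy => ?_⟩
    exact (show f v = y from hy).symm

lemma card_ne_ne {α : Type*} [Fintype α] [DecidableEq α] {a b : α} (hab : a ≠ b) :
    Fintype.card {j : α // j ≠ a ∧ j ≠ b} = Fintype.card α - 2 := by
  have h1 : Fintype.card {j : α // j ≠ a ∧ j ≠ b}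
      = Fintype.card {j : α // ¬ (j ∈ ({a, b} : Finset α))} := by
    apply Fintype.card_congr
    apply Equiv.subtypeEquivRight
    intro x; simp [not_or]
  rw [h1, Fintype.card_subtype_compl, Fintype.card_coe]
  congr 1
  rw [Finset.card_insert_of_notMem (by simp [hab]), Finset.card_singleton]

lemma bjgp_adj_lr {α : Type*} (m M : α) (j : α) (k : {j : α // j ≠ m ∧ j ≠ M}) :
    (bjgpGadget m M).Adj (Sum.inl j) (Sum.inr k) := by
  rw [bjgpGadget, SimpleGraph.fromRel_adj]
  exact ⟨by simp, Or.inl trivial⟩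

lemma bjgp_adj_ll {α : Type*} (m M : α) {j k : α} (h : j ≠ k) :
    (bjgpGadget m M).Adj (Sum.inl j) (Sum.inl k) := by
  rw [bjgpGadget, SimpleGraph.fromRel_adj]
  exact ⟨by simp [h], Or.inl h⟩

lemma bjgp_not_adj_rr {α : Type*} (m M : α) (j k : {j : α // j ≠ m ∧ j ≠ M}) :
    ¬ (bjgpGadget m M).Adj (Sum.inr j) (Sum.inr k) := by
  rw [bjgpGadget, SimpleGraph.fromRel_adj]
  rintro ⟨-, h | h⟩ <;> exact h

def f2 {α : Type*} [DecidableEq α] (m M : α) : GadVert α m M → GadVert α m M := fun v =>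
  match v with
  | Sum.inl j => if h : j ≠ m ∧ j ≠ M then Sum.inr ⟨j, h⟩
      else Sum.inl (if j = m then M else m)
  | Sum.inr k => Sum.inl k.val

lemma f2_inv {α : Type*} [DecidableEq α] (m M : α) (hmM : m ≠ M) :
    ∀ v, f2 m M (f2 m M v) = v := by
  rintro (j | k)
  · by_cases h : j ≠ m ∧ j ≠ M
    · simp [f2, h]
    · simp only [f2, dif_neg h]
      by_cases hjm : j = m
      · subst hjm
        rw [if_pos rfl]
        have : ¬ (M ≠ j ∧ M ≠ M) := by simp
        rw [dif_neg this, if_neg (Ne.symm hmM)]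
      · have hjM : j = M := by
          rcases not_and_or.mp h with h' | h'
          · exact absurd (not_not.mp h') hjm
          · exact not_not.mp h'
        subst hjM
        rw [if_neg hjm]
        have : ¬ (m ≠ m ∧ m ≠ j) := by simp
        rw [dif_neg this, if_pos rfl]
  · simp [f2, k.prop]

lemma f2_adj {α : Type*} [DecidableEq α] (m M : α) (hmM : m ≠ M) :
    ∀ v, (bjgpGadget m M).Adj v (f2 m M v) := by
  rintro (j | k)
  · by_cases h : j ≠ m ∧ j ≠ M
    · rw [f2, dif_pos h]; exact bjgp_adj_lr m M j ⟨j, h⟩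
    · rw [f2, dif_neg h]
      by_cases hjm : j = m
      · rw [if_pos hjm]; exact bjgp_adj_ll m M (hjm ▸ hmM)
      · rw [if_neg hjm]
        refine bjgp_adj_ll m M ?_
        have hjM : j = M := by
          rcases not_and_or.mp h with h' | h'
          · exact absurd (not_not.mp h') hjm
          · exact not_not.mp h'
        exact hjM ▸ (Ne.symm hmM)
  · exact ((bjgp_adj_lr m M k.val k)).symm

def f3 {α : Type*} (m M p q : α)
    (e : {j : α // j ≠ p ∧ j ≠ q} ≃ {j : α // j ≠ m ∧ j ≠ M}) :
    ↥{v : GadVert α m M | v ≠ Sum.inl p ∧ v ≠ Sum.inl q} →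
    ↥{v : GadVert α m M | v ≠ Sum.inl p ∧ v ≠ Sum.inl q} := fun v =>
  match v with
  | ⟨Sum.inl j, h⟩ =>
      ⟨Sum.inr (e ⟨j, ⟨fun hp => h.1 (congrArg Sum.inl hp),
        fun hq => h.2 (congrArg Sum.inl hq)⟩⟩), by simp⟩
  | ⟨Sum.inr k, _⟩ =>
      ⟨Sum.inl (e.symm k).val,
        ⟨fun h => (e.symm k).prop.1 (Sum.inl_injective h),
         fun h => (e.symm k).prop.2 (Sum.inl_injective h)⟩⟩

lemma f3_inv {α : Type*} (m M p q : α)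
    (e : {j : α // j ≠ p ∧ j ≠ q} ≃ {j : α // j ≠ m ∧ j ≠ M}) :
    ∀ v, f3 m M p q e (f3 m M p q e v) = v := by
  rintro ⟨j | k, h⟩ <;> simp [f3]

lemma f3_adj {α : Type*} (m M p q : α)
    (e : {j : α // j ≠ p ∧ j ≠ q} ≃ {j : α // j ≠ m ∧ j ≠ M}) :
    ∀ v, ((bjgpGadget m M).induce
      {v : GadVert α m M | v ≠ Sum.inl p ∧ v ≠ Sum.inl q}).Adj v (f3 m M p q e v) := by
  rintro ⟨j | k, h⟩
  · exact bjgp_adj_lr m M j _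
  · exact (bjgp_adj_lr m M _ k).symm

/-- The BJGP-gadget satisfies properties P1–P4 of a P-gadget:
(P1) it contains the distinguished vertices `x_q`, `q ∈ S` (pairwise distinct);
(P2) it has a perfect matching;
(P3) deleting `x_p, x_q` for `p ≠ q` leaves a graph which, if non-empty, has a perfect
matching; (P4) deleting `x_l` for all `l` in a set `L` with `|L| ≥ 3` leaves a graph
which, if non-empty, has no perfect matching. -/
theorem bjgpGadget_is_P_gadget (α : Type*) [Fintype α] [LinearOrder α]
    (hcard : 2 ≤ Fintype.card α) (m M : α) (hm : ∀ a, m ≤ a) (hM : ∀ a, a ≤ M) :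
    Function.Injective (Sum.inl : α → GadVert α m M) ∧
    (∃ Mat : (bjgpGadget m M).Subgraph, Mat.IsPerfectMatching) ∧
    (∀ p q : α, p ≠ q →
      (Nonempty ↥{v : GadVert α m M | v ≠ Sum.inl p ∧ v ≠ Sum.inl q} →
        ∃ Mat : ((bjgpGadget m M).induce
            {v : GadVert α m M | v ≠ Sum.inl p ∧ v ≠ Sum.inl q}).Subgraph,
          Mat.IsPerfectMatching)) ∧
    (∀ L : Finset α, 3 ≤ L.card →
      (Nonempty ↥{v : GadVert α m M | ∀ l ∈ L, v ≠ Sum.inl l} →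
        ¬ ∃ Mat : ((bjgpGadget m M).induce
            {v : GadVert α m M | ∀ l ∈ L, v ≠ Sum.inl l}).Subgraph,
          Mat.IsPerfectMatching)) := by
  classical
  have hmM : m ≠ M := by
    intro h
    obtain ⟨a, b, hab⟩ := Fintype.exists_pair_of_one_lt_card (α := α) (by omega)
    exact hab (le_antisymm ((hM a).trans (h ▸ hm b)) ((hM b).trans (h ▸ hm a)))
  refine ⟨Sum.inl_injective, ?_, ?_, ?_⟩
  · exact pm_of_involution _ (f2 m M) (f2_inv m M hmM) (f2_adj m M hmM)
  · intro p q hpq _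
    have e : {j : α // j ≠ p ∧ j ≠ q} ≃ {j : α // j ≠ m ∧ j ≠ M} :=
      Fintype.equivOfCardEq (by rw [card_ne_ne hpq, card_ne_ne hmM])
    exact pm_of_involution _ (f3 m M p q e) (f3_inv m M p q e) (f3_adj m M p q e)
  · rintro L hL - ⟨Mat0, hMat⟩
    rw [SimpleGraph.Subgraph.isPerfectMatching_iff] at hMat
    have hy : ∀ k : {j : α // j ≠ m ∧ j ≠ M},
        (Sum.inr k : GadVert α m M) ∈ {v : GadVert α m M | ∀ l ∈ L, v ≠ Sum.inl l} := by
      intro k l _ h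
      exact absurd h (by simp)
    have hex : ∀ k : {j : α // j ≠ m ∧ j ≠ M},
        ∃ w, Mat0.Adj ⟨Sum.inr k, hy k⟩ w := fun k => (hMat ⟨Sum.inr k, hy k⟩).exists
    choose part hpart using hex
    have hval : ∀ k, ∃ j, j ∉ L ∧ (part k).val = Sum.inl j := by
      intro k
      have hadj : (bjgpGadget m M).Adj (Sum.inr k) ((part k).val) :=
        Mat0.adj_sub (hpart k)
      cases hpk : (part k).val with
      | inl j =>
        exact ⟨j, fun hjL => (part k).prop j hjL hpk, rfl⟩
      | inr k' =>
        rw [hpk] at hadj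
        exact absurd hadj (bjgp_not_adj_rr m M k k')
    choose g hgL hgval using hval
    have hginj : Function.Injective g := by
      intro k1 k2 h
      have hp12 : part k1 = part k2 := Subtype.ext (by rw [hgval k1, hgval k2, h])
      have h1 : Mat0.Adj (part k1) ⟨Sum.inr k1, hy k1⟩ := (hpart k1).symm
      have h2 : Mat0.Adj (part k1) ⟨Sum.inr k2, hy k2⟩ := hp12 ▸ (hpart k2).symm
      have hu : (⟨Sum.inr k1, hy k1⟩ : ↥{v : GadVert α m M | ∀ l ∈ L, v ≠ Sum.inl l})
          = ⟨Sum.inr k2, hy k2⟩ := (hMat (part k1)).unique h1 h2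
      exact Sum.inr_injective (congrArg Subtype.val hu)
    have hle : (Finset.univ : Finset {j : α // j ≠ m ∧ j ≠ M}).card ≤ Lᶜ.card := by
      apply Finset.card_le_card_of_injOn g
      · intro k _
        simpa using hgL k
      · exact Function.Injective.injOn hginj
    rw [Finset.card_univ, card_ne_ne hmM, Finset.card_compl] at hle
    have hLle : L.card ≤ Fintype.card α := Finset.card_le_univ L
    omega
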